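/- Let n ≥ k+1 ≥ 3. The maximum length l of a sequence of positive integers t_1,...,t_l (indices mod l, with t_{l+1} = t_1) satisfying 1 ≤ t_i ≤ k for all i, t_i + t_{i+1} ≥ k+1 for all i, and t_1 + ... + t_l = n, is ⌊2n/(k+1)⌋. -/
import Mathlib

private lemma exists_seq (k : ℕ) (hk : 2 ≤ k) :
    ∀ n, k + 1 ≤ n → ∃ t : ℕ → ℕ,
      (∀ i < 2 * n / (k + 1), 1 ≤ t i ∧ t i ≤ k) ∧
      (∀ i, i + 1 < 2 * n / (k + 1) → k + 1 ≤ t i + t (i + 1)) ∧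
      (0 < 2 * n / (k + 1) → k + 1 ≤ t (2 * n / (k + 1) - 1) + t 0) ∧
      ∑ i ∈ Finset.range (2 * n / (k + 1)), t i = n := by
  intro n
  induction n using Nat.strong_induction_on with
  | _ n ih =>
    intro hn
    by_cases hbig : 2 * (k + 1) ≤ n
    · obtain ⟨t, h1, h2, h3, h4⟩ := ih (n - (k + 1)) (by omega) (by omega)
      set l' := 2 * (n - (k + 1)) / (k + 1) with hl'
      have hl2 : 2 ≤ l' := by
        have h' : (k + 1) * 2 ≤ 2 * (n - (k + 1)) := by omega
        calc 2 = (k + 1) * 2 / (k + 1) := by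
                rw [Nat.mul_div_cancel_left _ (by omega : 0 < k + 1)]
          _ ≤ l' := Nat.div_le_div_right h'
      have hl : 2 * n / (k + 1) = l' + 2 := by
        have h2n : 2 * n = 2 * (n - (k + 1)) + (k + 1) * 2 := by omega
        rw [h2n, Nat.add_mul_div_left _ _ (by omega : 0 < k + 1)]
      have ht0 := h1 0 (by omega)
      set T : ℕ → ℕ := fun i => if i = 0 then t 0 else if i = 1 then k + 1 - t 0 else t (i - 2)
        with hT
      have hT0 : T 0 = t 0 := by simp [hT]
      have hT1 : T 1 = k + 1 - t 0 := by simp [hT]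
      have hT2 : ∀ j, T (j + 2) = t j := by
        intro j
        rw [hT]
        simp only []
        rw [if_neg (by omega), if_neg (by omega)]
        congr 1
      refine ⟨T, ?_, ?_, ?_, ?_⟩
      · intro i hi
        rw [hl] at hi
        match i with
        | 0 => rw [hT0]; exact ht0
        | 1 => rw [hT1]; omega
        | (j + 2) => rw [hT2]; exact h1 j (by omega)
      · intro i hi
        rw [hl] at hi
        match i with
        | 0 => rw [hT0, hT1]; omega
        | 1 => rw [hT1, show (1 : ℕ) + 1 = 0 + 2 from rfl, hT2]; omega
        | (j + 2) =>
          rw [hT2, show j + 2 + 1 = (j + 1) + 2 from rfl, hT2]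
          exact h2 j (by omega)
      · intro _
        rw [hl]
        have hw := h3 (by omega)
        have e1 : l' + 2 - 1 = (l' - 1) + 2 := by omega
        rw [e1, hT2, hT0]
        exact hw
      · rw [hl, Finset.sum_range_succ', Finset.sum_range_succ']
        have e : ∀ i ∈ Finset.range l', T (i + 1 + 1) = t i := by
          intro i _
          rw [show i + 1 + 1 = i + 2 from rfl, hT2]
        rw [Finset.sum_congr rfl e, h4, hT1, hT0]
        omega
    · -- base case : k + 1 ≤ n ≤ 2k + 1
      by_cases hsm : 2 * n < 3 * (k + 1)
      · have hl : 2 * n / (k + 1) = 2 := by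
          apply Nat.div_eq_of_lt_le (by omega) (by omega)
        refine ⟨fun i => if i = 0 then k else n - k, ?_, ?_, ?_, ?_⟩
        · intro i hi
          rw [hl] at hi
          match i with
          | 0 => simp; omega
          | 1 => simp; omega
        · intro i hi
          rw [hl] at hi
          match i with
          | 0 => simp; omega
        · intro _
          rw [hl]; simp; omega
        · rw [hl]
          simp [Finset.sum_range_succ]
          omega
      · have hl : 2 * n / (k + 1) = 3 := by
          apply Nat.div_eq_of_lt_le (by omega) (by omega)
        refine ⟨fun i => if i ≤ 1 then k / 2 + 1 else n - 2 * (k / 2 + 1), ?_, ?_, ?_, ?_⟩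
        · intro i hi
          rw [hl] at hi
          match i with
          | 0 => simp; omega
          | 1 => simp; omega
          | 2 => simp; omega
        · intro i hi
          rw [hl] at hi
          match i with
          | 0 => simp; omega
          | 1 => simp; omega
        · intro _
          rw [hl]; simp; omega
        · rw [hl]
          simp [Finset.sum_range_succ]
          omega

theorem max_cyclic_gap_sequence (n k : ℕ) (hk : 2 ≤ k) (hn : k + 1 ≤ n) :
    IsGreatest
      {l : ℕ | ∃ t : ℕ → ℕ,
        (∀ i < l, 1 ≤ t i ∧ t i ≤ k) ∧
        (∀ i, i + 1 < l → k + 1 ≤ t i + t (i + 1)) ∧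
        (0 < l → k + 1 ≤ t (l - 1) + t 0) ∧
        ∑ i ∈ Finset.range l, t i = n}
      (2 * n / (k + 1)) := by
  constructor
  · exact exists_seq k hk n hn
  · rintro l ⟨t, h1, h2, h3, h4⟩
    rw [Nat.le_div_iff_mul_le (by omega : 0 < k + 1)]
    match l with
    | 0 => simp at h4; omega
    | 1 =>
      have := h1 0 (by omega)
      simp [Finset.sum_range_one] at h4
      omega
    | (m + 2) =>
      have hsum : ∑ i ∈ Finset.range (m + 1), (t i + t (i + 1)) + (t (m + 1) + t 0)
          = 2 * n := by
        have e1 : ∑ i ∈ Finset.range (m + 2), t i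
            = ∑ i ∈ Finset.range (m + 1), t i + t (m + 1) := Finset.sum_range_succ _ _
        have e2 : ∑ i ∈ Finset.range (m + 2), t i
            = ∑ i ∈ Finset.range (m + 1), t (i + 1) + t 0 := Finset.sum_range_succ' _ _
        have e3 : ∑ i ∈ Finset.range (m + 1), (t i + t (i + 1))
            = ∑ i ∈ Finset.range (m + 1), t i + ∑ i ∈ Finset.range (m + 1), t (i + 1) :=
          Finset.sum_add_distrib
        omega
      have hterm : ∀ i ∈ Finset.range (m + 1), k + 1 ≤ t i + t (i + 1) := by
        intro i hi
        exact h2 i (by simp at hi; omega)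
      have hlow : (Finset.range (m + 1)).card • (k + 1)
          ≤ ∑ i ∈ Finset.range (m + 1), (t i + t (i + 1)) :=
        Finset.card_nsmul_le_sum _ _ _ hterm
      simp only [Finset.card_range, smul_eq_mul] at hlow
      have hwrap : k + 1 ≤ t (m + 1) + t 0 := h3 (by omega)
      nlinarith [hsum, hlow, hwrap]
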